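/- arXiv:2509.20133 — 2 statements merged into one kernel-verified Lean document; each statement's English description precedes it below -/
import Mathlib

section
/- Let T be a positive linear map on B(H) and A a positive operator with T(A) ≤ A. If the sequence (T^n(A)) converges monotonically (decreasing) to 0 pointwise on a finite-dimensional support space, then there exist n₀ ∈ ℕ and 0 ≤ κ < 1 such that T^{n₀}(A) ≤ κ A. -/
open scoped InnerProductSpace
open Filter Topology

/-- The Loewner order on bounded operators: `A ≤ B` iff `B - A` is positive. -/
def LoewnerLE {H : Type*} [NormedAddCommGroup H] [InnerProductSpace ℂ H] [CompleteSpace H]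
    (A B : H →L[ℂ] H) : Prop := (B - A).IsPositive

section AuxLemmas

variable {H : Type*} [NormedAddCommGroup H] [InnerProductSpace ℂ H] [CompleteSpace H]

/-- Cauchy–Schwarz for the semi-inner product induced by a positive operator. -/
lemma pos_cs (B : H →L[ℂ] H) (hB : B.IsPositive) (u v : H) :
    ‖⟪u, B v⟫_ℂ‖ ^ 2 ≤ (⟪u, B u⟫_ℂ).re * (⟪v, B v⟫_ℂ).re := by
  have hsym : (B : H →ₗ[ℂ] H).IsSymmetric :=
    (ContinuousLinearMap.isSelfAdjoint_iff_isSymmetric).mp hB.isSelfAdjoint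
  have hsym' : ∀ a b : H, ⟪B a, b⟫_ℂ = ⟪a, B b⟫_ℂ := fun a b => hsym a b
  letI c : PreInnerProductSpace.Core ℂ H :=
  { inner := fun a b => ⟪a, B b⟫_ℂ
    conj_inner_symm := fun a b => by
      rw [← hsym' b a, inner_conj_symm]
    re_inner_nonneg := fun a => by
      have := hB.inner_nonneg_right a
      simpa using (Complex.nonneg_iff.mp this).1
    add_left := fun a b z => by simp [inner_add_left]
    smul_left := fun a b r => by simp [inner_smul_left]; ring }
  have key := @InnerProductSpace.Core.inner_mul_inner_self_le ℂ H _ _ _ c u v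
  have h1 : ‖⟪v, B u⟫_ℂ‖ = ‖⟪u, B v⟫_ℂ‖ := by
    rw [← hsym' u v]; exact norm_inner_symm _ _
  calc ‖⟪u, B v⟫_ℂ‖ ^ 2 = ‖⟪u, B v⟫_ℂ‖ * ‖⟪v, B u⟫_ℂ‖ := by rw [h1, sq]
    _ ≤ (⟪u, B u⟫_ℂ).re * (⟪v, B v⟫_ℂ).re := key

/-- Trace domination: a positive operator supported in a projection is dominated by its
"trace" (relative to an orthonormal basis of the range) times the projection. -/
lemma dom_trace {ι : Type*} [Fintype ι] (B Q : H →L[ℂ] H)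
    (hB : B.IsPositive) (hQsa : IsSelfAdjoint Q)
    (hBQ : B = Q * B * Q)
    (b : OrthonormalBasis ι ℂ (LinearMap.range (Q : H →ₗ[ℂ] H))) (x : H) :
    (⟪x, B x⟫_ℂ).re ≤ (∑ i, (⟪(b i : H), B (b i)⟫_ℂ).re) * ‖Q x‖ ^ 2 := by
  have hsymQ : (Q : H →ₗ[ℂ] H).IsSymmetric :=
    (ContinuousLinearMap.isSelfAdjoint_iff_isSymmetric).mp hQsa
  set y : H := Q x with hy
  have hymem : y ∈ LinearMap.range (Q : H →ₗ[ℂ] H) := ⟨x, rfl⟩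
  set Y : LinearMap.range (Q : H →ₗ[ℂ] H) := ⟨y, hymem⟩ with hY
  have step1 : ⟪x, B x⟫_ℂ = ⟪y, B y⟫_ℂ := by
    conv_lhs => rw [hBQ]
    rw [ContinuousLinearMap.mul_apply, ContinuousLinearMap.mul_apply]
    exact (hsymQ x (B (Q x))).symm
  set cc : ι → ℂ := fun i => b.repr Y i with hcc
  have hexp : (∑ i, cc i • (b i : H)) = y := by
    have := congrArg (Subtype.val) (b.sum_repr Y)
    simpa using this
  set M : ι → ι → ℂ := fun i j => ⟪(b i : H), B (b j)⟫_ℂ with hM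
  set d : ι → ℝ := fun i => (⟪(b i : H), B (b i)⟫_ℂ).re with hd
  have hd0 : ∀ i, 0 ≤ d i := fun i => by
    have := hB.inner_nonneg_right (b i : H); simpa [hd] using (Complex.nonneg_iff.mp this).1
  have step2 : ⟪y, B y⟫_ℂ = ∑ i, ∑ j, (starRingEnd ℂ) (cc i) * (cc j * M i j) := by
    rw [← hexp]
    rw [map_sum, sum_inner]
    congr 1; ext i
    rw [inner_smul_left, inner_sum, Finset.mul_sum]
    congr 1; ext j
    rw [map_smul, inner_smul_right]
  have step3 : (⟪y, B y⟫_ℂ).re ≤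
      ∑ i, ∑ j, (‖cc i‖ * Real.sqrt (d i)) * (‖cc j‖ * Real.sqrt (d j)) := by
    rw [step2]
    calc (∑ i, ∑ j, (starRingEnd ℂ) (cc i) * (cc j * M i j)).re
        ≤ ∑ i, ∑ j, ‖(starRingEnd ℂ) (cc i) * (cc j * M i j)‖ := by
          rw [Complex.re_sum]
          refine Finset.sum_le_sum fun i _ => ?_
          calc (∑ j, (starRingEnd ℂ) (cc i) * (cc j * M i j)).re
              ≤ ‖∑ j, (starRingEnd ℂ) (cc i) * (cc j * M i j)‖ := Complex.re_le_norm _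
            _ ≤ ∑ j, ‖(starRingEnd ℂ) (cc i) * (cc j * M i j)‖ := norm_sum_le _ _
      _ ≤ ∑ i, ∑ j, (‖cc i‖ * Real.sqrt (d i)) * (‖cc j‖ * Real.sqrt (d j)) := by
          refine Finset.sum_le_sum fun i _ => Finset.sum_le_sum fun j _ => ?_
          rw [norm_mul, norm_mul, RCLike.norm_conj]
          have hMij : ‖M i j‖ ≤ Real.sqrt (d i) * Real.sqrt (d j) := by
            rw [← Real.sqrt_mul (hd0 i)]
            rw [Real.le_sqrt (norm_nonneg _) (mul_nonneg (hd0 i) (hd0 j))]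
            exact pos_cs B hB (b i : H) (b j : H)
          calc ‖cc i‖ * (‖cc j‖ * ‖M i j‖)
              ≤ ‖cc i‖ * (‖cc j‖ * (Real.sqrt (d i) * Real.sqrt (d j))) := by
                gcongr
            _ = (‖cc i‖ * Real.sqrt (d i)) * (‖cc j‖ * Real.sqrt (d j)) := by ring
  have step4 : ∑ i, ∑ j, (‖cc i‖ * Real.sqrt (d i)) * (‖cc j‖ * Real.sqrt (d j))
      = (∑ i, ‖cc i‖ * Real.sqrt (d i)) ^ 2 := by
    rw [sq, Finset.sum_mul_sum]
  have step5 : (∑ i, ‖cc i‖ * Real.sqrt (d i)) ^ 2 ≤ (∑ i, ‖cc i‖ ^ 2) * ∑ i, (d i) := by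
    have := Finset.sum_mul_sq_le_sq_mul_sq Finset.univ (fun i => ‖cc i‖)
      (fun i => Real.sqrt (d i))
    calc (∑ i, ‖cc i‖ * Real.sqrt (d i)) ^ 2
        ≤ (∑ i, ‖cc i‖ ^ 2) * ∑ i, (Real.sqrt (d i)) ^ 2 := this
      _ = (∑ i, ‖cc i‖ ^ 2) * ∑ i, d i := by
          congr 1; exact Finset.sum_congr rfl fun i _ => Real.sq_sqrt (hd0 i)
  have step6 : ∑ i, ‖cc i‖ ^ 2 = ‖Q x‖ ^ 2 := by
    have h1 : ‖b.repr Y‖ = ‖Y‖ := b.repr.norm_map Y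
    have h2 : ‖Y‖ = ‖Q x‖ := rfl
    have h3 : ‖b.repr Y‖ ^ 2 = ∑ i, ‖b.repr Y i‖ ^ 2 := by
      rw [EuclideanSpace.norm_eq]
      rw [Real.sq_sqrt (by positivity)]
    rw [← h2, ← h1, h3]
  have hfinal : (⟪x, B x⟫_ℂ).re ≤ ‖Q x‖ ^ 2 * ∑ i, d i := by
    rw [step1]
    calc (⟪y, B y⟫_ℂ).re ≤ _ := step3
      _ = (∑ i, ‖cc i‖ * Real.sqrt (d i)) ^ 2 := step4
      _ ≤ (∑ i, ‖cc i‖ ^ 2) * ∑ i, d i := step5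
      _ = ‖Q x‖ ^ 2 * ∑ i, d i := by rw [step6]
  calc (⟪x, B x⟫_ℂ).re ≤ ‖Q x‖ ^ 2 * ∑ i, d i := hfinal
    _ = (∑ i, (⟪(b i : H), B (b i)⟫_ℂ).re) * ‖Q x‖ ^ 2 := by rw [mul_comm]

end AuxLemmas

set_option maxHeartbeats 1000000 in
/-- `T` a positive linear map, `A` positive with `T(A) ≤ A`, supported on a
finite-dimensional support space (with support projection `Q`, and `A` bounded below by a
positive multiple of `Q`), and `T^n(A)` decreasing to `0` pointwise (weak*), each `T^n(A)`
supported in `supp A`.  Then there are `n₀` and `0 ≤ κ < 1` with `T^{n₀}(A) ≤ κ A`. -/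
theorem stmt1 {H : Type*} [NormedAddCommGroup H] [InnerProductSpace ℂ H] [CompleteSpace H]
    (T : (H →L[ℂ] H) →ₗ[ℂ] (H →L[ℂ] H))
    (hTpos : ∀ B : H →L[ℂ] H, B.IsPositive → (T B).IsPositive)
    (A : H →L[ℂ] H) (hA : A.IsPositive) (hTA : LoewnerLE (T A) A)
    (Q : H →L[ℂ] H) (hQproj : IsIdempotentElem Q) (hQsa : IsSelfAdjoint Q)
    (hQfin : FiniteDimensional ℂ (LinearMap.range (Q : H →ₗ[ℂ] H)))
    (hsupp : ∀ x : H, Q x = 0 → A x = 0)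
    (hbelow : ∃ c : ℝ, 0 < c ∧ LoewnerLE (c • Q) A)
    (hsupport : ∀ n : ℕ, (T ^ n) A = Q * ((T ^ n) A) * Q)
    (hdecr : ∀ n : ℕ, LoewnerLE ((T ^ (n + 1)) A) ((T ^ n) A))
    (hto0 : ∀ x : H, Tendsto (fun n : ℕ => (⟪x, ((T ^ n) A) x⟫_ℂ)) atTop (nhds 0)) :
    ∃ (n₀ : ℕ) (κ : ℝ), 0 ≤ κ ∧ κ < 1 ∧ LoewnerLE ((T ^ n₀) A) (κ • A) := by
  obtain ⟨c, hc, hcQ⟩ := hbelow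
  -- positivity of all iterates
  have hTn : ∀ n : ℕ, ((T ^ n) A).IsPositive := by
    intro n
    induction n with
    | zero => simpa using hA
    | succ n ih =>
      have : (T ^ (n + 1)) A = T ((T ^ n) A) := by
        rw [pow_succ']
        rfl
      rw [this]
      exact hTpos _ ih
  haveI : FiniteDimensional ℂ (LinearMap.range (Q : H →ₗ[ℂ] H)) := hQfin
  set b := stdOrthonormalBasis ℂ (LinearMap.range (Q : H →ₗ[ℂ] H)) with hb
  set f : ℕ → ℝ := fun n => ∑ i, (⟪(b i : H), ((T ^ n) A) (b i)⟫_ℂ).re with hf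
  have hti : ∀ i, Tendsto (fun n : ℕ => (⟪(b i : H), ((T ^ n) A) (b i)⟫_ℂ).re)
      atTop (nhds 0) := fun i => by
    simpa [Function.comp_def] using (Complex.continuous_re.tendsto 0).comp (hto0 (b i : H))
  have htend : Tendsto f atTop (nhds 0) := by
    have h := tendsto_finset_sum (f := fun i (n : ℕ) =>
      (⟪(b i : H), ((T ^ n) A) (b i)⟫_ℂ).re) Finset.univ (fun i _ => hti i)
    simpa [hf] using h
  obtain ⟨N, hN⟩ : ∃ N, f N < c / 2 :=
    (htend.eventually_lt_const (by positivity)).exists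
  set B := (T ^ N) A with hB
  -- quadratic form estimates
  have hQsym : (Q : H →ₗ[ℂ] H).IsSymmetric :=
    (ContinuousLinearMap.isSelfAdjoint_iff_isSymmetric).mp hQsa
  have hQnorm : ∀ x : H, (⟪Q x, x⟫_ℂ).re = ‖Q x‖ ^ 2 := by
    intro x
    have h1 : Q (Q x) = Q x := by
      rw [← ContinuousLinearMap.mul_apply, hQproj]
    have h2 : ⟪Q x, x⟫_ℂ = ⟪Q x, Q x⟫_ℂ := by
      conv_lhs => rw [← h1]
      exact hQsym (Q x) x
    rw [h2]
    have := inner_self_eq_norm_sq (𝕜 := ℂ) (Q x)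
    simpa using this
  have hdom : ∀ x : H, (⟪B x, x⟫_ℂ).re ≤ f N * ‖Q x‖ ^ 2 := by
    intro x
    have hsymB : (B : H →ₗ[ℂ] H).IsSymmetric :=
      (ContinuousLinearMap.isSelfAdjoint_iff_isSymmetric).mp (hTn N).isSelfAdjoint
    have h0 : ⟪B x, x⟫_ℂ = ⟪x, B x⟫_ℂ := hsymB x x
    rw [h0]
    exact dom_trace B Q (hTn N) hQsa (hsupport N) b x
  have hAQ : ∀ x : H, c * ‖Q x‖ ^ 2 ≤ (⟪A x, x⟫_ℂ).re := by
    intro x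
    have h := hcQ.2 x
    have hx : ContinuousLinearMap.reApplyInnerSelf (A - c • Q) x
        = (⟪A x, x⟫_ℂ).re - c * ‖Q x‖ ^ 2 := by
      rw [ContinuousLinearMap.reApplyInnerSelf]
      rw [ContinuousLinearMap.sub_apply, inner_sub_left]
      rw [ContinuousLinearMap.smul_apply]
      rw [RCLike.real_smul_eq_coe_smul (K := ℂ), inner_smul_left]
      simp [hQnorm x]
    rw [hx] at h
    linarith
  -- conclusion
  refine ⟨N, 1/2, by norm_num, by norm_num, ?_⟩
  constructor
  · have hs : (1/2 : ℝ) • A = ((1/2 : ℂ)) • A := by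
      rw [RCLike.real_smul_eq_coe_smul (K := ℂ)]
      norm_num
    have h1 : IsSelfAdjoint ((1/2 : ℝ) • A) := by
      rw [hs]
      have hr : IsSelfAdjoint (1/2 : ℂ) := by
        rw [IsSelfAdjoint, Complex.star_def]
        simp [Complex.ext_iff]
      exact IsSelfAdjoint.smul hr hA.isSelfAdjoint
    exact (ContinuousLinearMap.isSelfAdjoint_iff_isSymmetric).mp (h1.sub (hTn N).isSelfAdjoint)
  · intro x
    have hx : ContinuousLinearMap.reApplyInnerSelf ((1/2 : ℝ) • A - B) x
        = (1/2) * (⟪A x, x⟫_ℂ).re - (⟪B x, x⟫_ℂ).re := by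
      rw [ContinuousLinearMap.reApplyInnerSelf]
      rw [ContinuousLinearMap.sub_apply, inner_sub_left]
      rw [ContinuousLinearMap.smul_apply]
      rw [RCLike.real_smul_eq_coe_smul (K := ℂ), inner_smul_left]
      simp
    rw [hx]
    have h1 : (⟪B x, x⟫_ℂ).re ≤ f N * ‖Q x‖ ^ 2 := hdom x
    have h2 : f N * ‖Q x‖ ^ 2 ≤ (c / 2) * ‖Q x‖ ^ 2 :=
      mul_le_mul_of_nonneg_right hN.le (sq_nonneg _)
    have h3 : c * ‖Q x‖ ^ 2 ≤ (⟪A x, x⟫_ℂ).re := hAQ x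
    linarith
end

section
/- Let T be an irreducible positive trace-preserving linear map on d×d matrices (a quantum channel) whose peripheral spectrum consists of the m-th roots of unity, each a simple eigenvalue, with all other eigenvalues of modulus < 1. If for some irrational multiple α of the period, T^α (defined via a logarithm consistent with a one-parameter semigroup e^{tL} with T = e^{L}) is also irreducible with peripheral eigenvalues that are roots of unity, then m = 1, i.e., T is primitive. -/
open Filter Topology

private theorem exp_apply_eig {V : Type*} [NormedAddCommGroup V] [NormedSpace ℂ V]
    [CompleteSpace V]
    (L : V →L[ℂ] V) (μ : ℂ) (v : V) (hv : L v = μ • v) :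
    (NormedSpace.exp L) v = Complex.exp μ • v := by
  have hpow : ∀ n : ℕ, (L ^ n) v = μ ^ n • v := by
    intro n; induction n with
    | zero => simp
    | succ n ih =>
        rw [pow_succ, ContinuousLinearMap.mul_apply, hv, map_smul, ih, smul_smul, pow_succ,
          mul_comm]
  have hsum : Summable fun n : ℕ => ((n.factorial : ℂ))⁻¹ • L ^ n :=
    NormedSpace.expSeries_summable' (𝕂 := ℂ) L
  have := (ContinuousLinearMap.apply ℂ V v).map_tsum hsum
  rw [NormedSpace.exp_eq_tsum (𝕂 := ℂ)]
  calc (∑' n : ℕ, ((n.factorial : ℂ))⁻¹ • L ^ n) v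
      = ∑' n : ℕ, (((n.factorial : ℂ))⁻¹ • L ^ n) v := by simpa using this
    _ = ∑' n : ℕ, (((n.factorial : ℂ))⁻¹ * μ ^ n) • v := by
        congr 1; ext n; simp [hpow n, smul_smul]
    _ = (∑' n : ℕ, ((n.factorial : ℂ))⁻¹ * μ ^ n) • v := by
        rw [Summable.tsum_smul_const (by simpa [smul_eq_mul] using
          NormedSpace.expSeries_summable' (𝕂 := ℂ) μ)]
    _ = Complex.exp μ • v := by
        rw [Complex.exp_eq_exp_ℂ, NormedSpace.exp_eq_tsum (𝕂 := ℂ)]; simp [smul_eq_mul]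

/-- let `T = e^L` belong to a one-parameter semigroup `e^{tL}` of maps on a
finite-dimensional space, with spectral radius `≤ 1`, peripheral spectrum exactly the
`m`-th roots of unity, each a simple eigenvalue, all other eigenvalues of modulus `< 1`.
If for some irrational `α > 0` the map `T^α = e^{αL}` is also irreducible (1 a simple
eigenvalue) with all peripheral eigenvalues roots of unity, then `m = 1`
(`T` is primitive). -/
theorem stmt11 {V : Type*} [NormedAddCommGroup V] [NormedSpace ℂ V] [CompleteSpace V]
    [FiniteDimensional ℂ V]
    (L T : V →L[ℂ] V) (hT : T = NormedSpace.exp L)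
    (m : ℕ) (hm : 0 < m)
    (hspec1 : ∀ z ∈ spectrum ℂ T, ‖z‖ ≤ 1)
    (hperiph : {z ∈ spectrum ℂ T | ‖z‖ = 1} = {z : ℂ | z ^ m = 1})
    (hsimple : ∀ z : ℂ, z ^ m = 1 →
      Module.finrank ℂ (Module.End.eigenspace (T : Module.End ℂ V) z) = 1)
    (α : ℝ) (hα0 : 0 < α) (hαirr : Irrational α)
    (Tα : V →L[ℂ] V) (hTα : Tα = NormedSpace.exp (α • L))
    (hTαirr : Module.finrank ℂ (Module.End.eigenspace (Tα : Module.End ℂ V) 1) = 1)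
    (hTαper : ∀ z ∈ spectrum ℂ Tα, ‖z‖ = 1 → ∃ n : ℕ, 0 < n ∧ z ^ n = 1) :
    m = 1 := by
  by_contra hm1
  have hm2 : 2 ≤ m := by omega
  -- the primitive m-th root of unity z0
  set z0 : ℂ := Complex.exp (2 * Real.pi * Complex.I / m) with hz0def
  have hmC : (m : ℂ) ≠ 0 := Nat.cast_ne_zero.mpr hm.ne'
  have hz0m : z0 ^ m = 1 := by
    rw [hz0def, ← Complex.exp_nat_mul]
    have : (m : ℂ) * (2 * Real.pi * Complex.I / m) = 2 * Real.pi * Complex.I := by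
      field_simp
    rw [this, Complex.exp_two_pi_mul_I]
  -- the eigenspace of T at z0 is 1-dimensional
  set E := Module.End.eigenspace (T : Module.End ℂ V) z0 with hEdef
  have hE1 : Module.finrank ℂ E = 1 := hsimple z0 hz0m
  obtain ⟨⟨v, hvE⟩, hvne, hvspan⟩ := finrank_eq_one_iff'.mp hE1
  have hv0 : v ≠ 0 := fun h => hvne (by simp [h])
  have hTv : T v = z0 • v := Module.End.mem_eigenspace_iff.mp hvE
  -- L commutes with T, hence preserves E
  have hcomm : Commute T L := by
    rw [hT]; exact Commute.exp_left (Commute.refl L)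
  have hLvE : L v ∈ E := by
    rw [hEdef, Module.End.mem_eigenspace_iff]
    have : T (L v) = L (T v) := by
      have := congrArg (fun A : V →L[ℂ] V => A v) hcomm.eq
      simpa [ContinuousLinearMap.mul_apply] using this
    rw [ContinuousLinearMap.coe_coe, this, hTv, map_smul]
  -- v is an eigenvector of L
  obtain ⟨μ, hμv⟩ := hvspan ⟨L v, hLvE⟩
  have hLv : L v = μ • v := by
    have := congrArg (Subtype.val) hμv
    simpa using this.symm
  -- exp μ = z0
  have hexpμ : Complex.exp μ = z0 := by
    have h1 : T v = Complex.exp μ • v := by rw [hT]; exact exp_apply_eig L μ v hLv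
    have h2 : (Complex.exp μ - z0) • v = 0 := by
      rw [sub_smul, ← h1, hTv, sub_self]
    rcases smul_eq_zero.mp h2 with h | h
    · exact sub_eq_zero.mp h
    · exact absurd h hv0
  -- hence μ = 2πI/m + k·2πI for some integer k
  obtain ⟨k, hμ⟩ : ∃ k : ℤ, μ = 2 * Real.pi * Complex.I / m + k * (2 * Real.pi * Complex.I) := by
    have := Complex.exp_eq_exp_iff_exists_int.mp (hexpμ.trans rfl)
    simpa using this
  -- v is an eigenvector of Tα with eigenvalue exp (α μ)
  have hαLv : (α • L) v = ((α : ℂ) * μ) • v := by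
    rw [ContinuousLinearMap.smul_apply, hLv, mul_smul, Complex.coe_smul]
  have hTαv : Tα v = Complex.exp ((α : ℂ) * μ) • v := by
    rw [hTα]; exact exp_apply_eig (α • L) _ v hαLv
  set z : ℂ := Complex.exp ((α : ℂ) * μ) with hzdef
  -- z is in the spectrum of Tα
  have hzspec : z ∈ spectrum ℂ Tα := by
    rw [spectrum.mem_iff]
    intro hunit
    obtain ⟨u, hu⟩ := hunit
    have happ : (algebraMap ℂ (V →L[ℂ] V) z - Tα) v = 0 := by
      simp [ContinuousLinearMap.sub_apply, hTαv, Module.algebraMap_end_apply,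
        ContinuousLinearMap.smul_apply]
    have : v = 0 := by
      have h1 : ((↑u⁻¹ * ↑u : V →L[ℂ] V)) v = v := by rw [u.inv_mul]; simp
      rw [ContinuousLinearMap.mul_apply, hu, happ, map_zero] at h1
      exact h1.symm
    exact hv0 this
  -- μ is purely imaginary
  have hμre : μ.re = 0 := by
    rw [hμ]; simp [Complex.div_re, Complex.mul_re, Complex.mul_im]
  have hαμre : ((α : ℂ) * μ).re = 0 := by
    simp [Complex.mul_re, hμre]
  -- so ‖z‖ = 1
  have hznorm : ‖z‖ = 1 := by
    rw [hzdef, Complex.norm_exp, hαμre, Real.exp_zero]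
  -- z is a root of unity
  obtain ⟨n, hn0, hzn⟩ := hTαper z hzspec hznorm
  -- extract the integer relation
  have hexp1 : Complex.exp ((n : ℂ) * ((α : ℂ) * μ)) = 1 := by
    rw [Complex.exp_nat_mul]; exact hzn
  obtain ⟨j, hj⟩ := Complex.exp_eq_one_iff.mp hexp1
  -- rewrite: n * α * (1/m + k) * (2πI) = j * (2πI)
  have h2πI : (2 * Real.pi * Complex.I) ≠ 0 := by
    simp [Real.pi_ne_zero, Complex.I_ne_zero]
  have hkey : (n : ℂ) * (α : ℂ) * (1 / m + k) = j := by
    have hμ' : μ = (1 / m + k) * (2 * Real.pi * Complex.I) := by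
      rw [hμ]; field_simp
    have : (n : ℂ) * (α : ℂ) * (1 / m + k) * (2 * Real.pi * Complex.I)
        = j * (2 * Real.pi * Complex.I) := by
      rw [← hj, hμ']; ring
    exact mul_right_cancel₀ h2πI this
  -- transfer to the reals
  have hkeyR : (n : ℝ) * α * (1 / m + k) = j := by
    have := hkey
    have h1 : (((n : ℝ) * α * (1 / m + k) : ℝ) : ℂ) = ((j : ℝ) : ℂ) := by
      push_cast at this ⊢
      convert this using 2
    exact_mod_cast h1
  -- 1/m + k ≠ 0 since 0 < 1/m < 1
  set q : ℚ := (n : ℚ) * (1 / m + k) with hqdef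
  have hq0 : q ≠ 0 := by
    have h1 : (0 : ℚ) < 1 / m := by positivity
    have h2 : (1 : ℚ) / m < 1 := by
      rw [div_lt_one (by exact_mod_cast hm)]
      exact_mod_cast hm2.trans_lt' one_lt_two
    have : (1 / m + k : ℚ) ≠ 0 := by
      intro h
      have hk : (k : ℚ) = -(1 / m) := by linarith
      have : (1 : ℚ) / m < 1 ∧ 0 < (1 : ℚ) / m := ⟨h2, h1⟩
      rcases lt_trichotomy k 0 with hk' | hk' | hk'
      · have hk1 : k ≤ -1 := by omega
        have : (k : ℚ) ≤ -1 := by exact_mod_cast hk1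
        linarith
      · rw [hk'] at hk; norm_num at hk; linarith
      · have : (1 : ℚ) ≤ (k : ℚ) := by exact_mod_cast hk'
        linarith
    simp only [hqdef, mul_ne_zero_iff]
    exact ⟨Nat.cast_ne_zero.mpr hn0.ne', this⟩
  -- α is rational: contradiction
  have hαq : α * (q : ℝ) = (j : ℝ) := by
    rw [hqdef]
    push_cast
    rw [← hkeyR]; ring
  have : α = (((j : ℚ) / q : ℚ) : ℝ) := by
    have hq0' : (q : ℝ) ≠ 0 := by exact_mod_cast hq0
    push_cast
    field_simp
    linarith [hαq]
  exact hαirr ⟨(j : ℚ) / q, this.symm⟩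
end
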